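/- The normalization constant of fractional Brownian motion satisfies the identity: for H ∈ (0,1), (1/Γ(H+1/2)²)·[∫₀^∞ ((1+s)^{H-1/2} − s^{H-1/2})² ds + 1/(2H)] = 1/(Γ(2H+1)·sin(πH)). -/

import Mathlib

open Real MeasureTheory

namespace FBMaux

open Set Filter

/-! ### Beta integrals -/

lemma beta_Ioo (p q : ℝ) (hp : 0 < p) (hq : 0 < q) :
    ∫ x in Ioo (0:ℝ) 1, x ^ (p-1) * (1-x) ^ (q-1)
      = Gamma p * Gamma q / Gamma (p+q) := by
  have hmain := Complex.Gamma_mul_Gamma_eq_betaIntegral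
    (s := (p:ℂ)) (t := (q:ℂ)) (by simpa using hp) (by simpa using hq)
  have hbeta : Complex.betaIntegral p q
      = ((∫ x in (0:ℝ)..1, x ^ (p-1) * (1-x) ^ (q-1) : ℝ) : ℂ) := by
    rw [Complex.betaIntegral, ← intervalIntegral.integral_ofReal]
    refine intervalIntegral.integral_congr fun x hx => ?_
    rw [Set.uIcc_of_le (zero_le_one)] at hx
    have h1 := Complex.ofReal_cpow hx.1 (p-1)
    have h2 := Complex.ofReal_cpow (show (0:ℝ) ≤ 1-x by linarith [hx.2]) (q-1)
    rw [Complex.ofReal_mul, h1, h2]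
    push_cast
    ring
  rw [hbeta, ← Complex.ofReal_add, Complex.Gamma_ofReal, Complex.Gamma_ofReal,
    Complex.Gamma_ofReal, ← Complex.ofReal_mul, ← Complex.ofReal_mul] at hmain
  have hreal : Gamma p * Gamma q
      = Gamma (p+q) * ∫ x in (0:ℝ)..1, x ^ (p-1) * (1-x) ^ (q-1) := by
    exact_mod_cast hmain
  have hG : Gamma (p+q) ≠ 0 := (Real.Gamma_pos_of_pos (by linarith)).ne'
  rw [intervalIntegral.integral_of_le zero_le_one,
    MeasureTheory.integral_Ioc_eq_integral_Ioo] at hreal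
  rw [eq_div_iff hG, hreal]
  ring

lemma beta_Ioi (p q u v : ℝ) (hp : 0 < p) (hq : 0 < q) (hu : u = p - 1)
    (hv : v = -(p+q)) :
    ∫ s in Ioi (0:ℝ), s ^ u * (1+s) ^ v = Gamma p * Gamma q / Gamma (p+q) := by
  subst hu hv
  have himg : (fun x : ℝ => x / (1-x)) '' Ioo 0 1 = Ioi 0 := by
    ext s
    simp only [Set.mem_image, Set.mem_Ioo, Set.mem_Ioi]
    constructor
    · rintro ⟨x, ⟨hx0, hx1⟩, rfl⟩
      exact div_pos hx0 (by linarith)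
    · intro hs
      refine ⟨s/(1+s), ⟨div_pos hs (by linarith), ?_⟩, ?_⟩
      · rw [div_lt_one (by linarith)]; linarith
      · field_simp
        ring
  have hderiv : ∀ x ∈ Ioo (0:ℝ) 1, HasDerivWithinAt (fun x : ℝ => x / (1-x))
      (((1-x)^2)⁻¹) (Ioo 0 1) x := by
    intro x hx
    have h1 : (1:ℝ) - x ≠ 0 := by
      have : (0:ℝ) < 1 - x := by linarith [hx.2]
      exact this.ne'
    have h := (hasDerivAt_id x).div ((hasDerivAt_id x).const_sub 1) h1
    simp only [id_eq] at h
    refine h.hasDerivWithinAt.congr_deriv ?_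
    ring
  have hinj : Set.InjOn (fun x : ℝ => x / (1-x)) (Ioo 0 1) := by
    intro x hx y hy hxy
    have h1 : (0:ℝ) < 1 - x := by linarith [hx.2]
    have h2 : (0:ℝ) < 1 - y := by linarith [hy.2]
    field_simp at hxy
    nlinarith [hxy]
  rw [← himg, integral_image_eq_integral_abs_deriv_smul measurableSet_Ioo hderiv hinj,
    ← beta_Ioo p q hp hq]
  refine setIntegral_congr_fun measurableSet_Ioo fun x hx => ?_
  obtain ⟨hx0, hx1⟩ := hx
  have h1x : (0:ℝ) < 1 - x := by linarith
  have hfx : (1:ℝ) + x/(1-x) = (1-x)⁻¹ := by field_simp; ring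
  rw [smul_eq_mul, hfx, abs_of_pos (by positivity)]
  have e1 : ((1-x)^2)⁻¹ = (1-x)^(-2 : ℝ) := by
    rw [← Real.rpow_natCast (1-x) 2, ← Real.rpow_neg h1x.le]
    norm_num
  have e2 : (x/(1-x))^(p-1) = x^(p-1) * (1-x)^(-(p-1)) := by
    rw [Real.div_rpow hx0.le h1x.le, Real.rpow_neg h1x.le, div_eq_mul_inv]
  have e3 : ((1-x)⁻¹)^(-(p+q)) = (1-x)^(p+q) := by
    rw [Real.inv_rpow h1x.le, ← Real.rpow_neg h1x.le, neg_neg]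
  rw [e1, e2, e3]
  have e4 : (1-x)^(-2:ℝ) * (1-x)^(-(p-1)) * (1-x)^(p+q) = (1-x)^(q-1) := by
    rw [← Real.rpow_add h1x, ← Real.rpow_add h1x]
    congr 1
    ring
  rw [← e4]
  ring

/-! ### Continuity helpers -/

lemma contOn_rpow (b : ℝ) : ContinuousOn (fun s : ℝ => s ^ b) (Ioi 0) :=
  ContinuousOn.rpow_const continuousOn_id fun x hx => Or.inl (ne_of_gt hx)

lemma contOn_rpow1p (b : ℝ) : ContinuousOn (fun s : ℝ => (1+s) ^ b) (Ioi 0) :=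
  ContinuousOn.rpow_const (continuous_const.add continuous_id).continuousOn
    fun x hx => Or.inl (by have : (0:ℝ) < x := hx; positivity)

lemma contOn_f (a : ℝ) : ContinuousOn (fun s : ℝ => (1+s) ^ a - s ^ a) (Ioi 0) :=
  (contOn_rpow1p a).sub (contOn_rpow a)

/-! ### Integrability helpers -/

lemma intOn_bound {g b1 b2 : ℝ → ℝ} (hg : ContinuousOn g (Ioi 0))
    (hb1 : IntegrableOn b1 (Ioc (0:ℝ) 1)) (hb2 : IntegrableOn b2 (Ioi (1:ℝ)))
    (h1 : ∀ s ∈ Ioc (0:ℝ) 1, |g s| ≤ b1 s) (h2 : ∀ s ∈ Ioi (1:ℝ), |g s| ≤ b2 s) :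
    IntegrableOn g (Ioi (0:ℝ)) := by
  rw [← Set.Ioc_union_Ioi_eq_Ioi (zero_le_one : (0:ℝ) ≤ 1)]
  refine MeasureTheory.IntegrableOn.union ?_ ?_
  · refine Integrable.mono' hb1
      ((hg.mono fun x hx => hx.1).aestronglyMeasurable measurableSet_Ioc) ?_
    exact (ae_restrict_iff' measurableSet_Ioc).2 (ae_of_all _ fun x hx => by
      simpa [Real.norm_eq_abs] using h1 x hx)
  · refine Integrable.mono' hb2
      ((hg.mono fun x (hx : x ∈ Ioi (1:ℝ)) => Set.mem_Ioi.2 (lt_trans zero_lt_one (Set.mem_Ioi.1 hx))).aestronglyMeasurable measurableSet_Ioi) ?_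
    exact (ae_restrict_iff' measurableSet_Ioi).2 (ae_of_all _ fun x hx => by
      simpa [Real.norm_eq_abs] using h2 x hx)

lemma intOn_rpow_Ioc {r : ℝ} (hr : -1 < r) :
    IntegrableOn (fun s : ℝ => s ^ r) (Ioc (0:ℝ) 1) :=
  (intervalIntegrable_iff_integrableOn_Ioc_of_le zero_le_one).1 (intervalIntegral.intervalIntegrable_rpow' hr)

lemma intOn_rpow_mul_Ioi {r r' : ℝ} (hr : r + r' < -1) :
    IntegrableOn (fun s : ℝ => s ^ r * s ^ r') (Ioi (1:ℝ)) := by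
  refine (MeasureTheory.IntegrableOn.congr_fun
    (integrableOn_Ioi_rpow_of_lt hr zero_lt_one) (fun s hs => ?_) measurableSet_Ioi)
  exact Real.rpow_add (lt_trans zero_lt_one hs) r r'

/-! ### Pointwise bounds -/

lemma f_le_Ioc {a : ℝ} (ha1 : a ≤ 1) :
    ∀ s ∈ Ioc (0:ℝ) 1, |(1+s)^a - s^a| ≤ 2 + s^a := by
  intro s hs
  have hs0 := hs.1
  have h2 : (1+s)^a ≤ 2 := by
    rcases le_or_gt a 0 with h|h
    · calc (1+s)^a ≤ 1 := Real.rpow_le_one_of_one_le_of_nonpos (by linarith) h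
        _ ≤ 2 := one_le_two
    · calc (1+s)^a ≤ 2^a :=
            Real.rpow_le_rpow (by linarith) (by linarith [hs.2]) h.le
        _ ≤ 2^(1:ℝ) := Real.rpow_le_rpow_of_exponent_le one_le_two ha1
        _ = 2 := Real.rpow_one 2
  calc |(1+s)^a - s^a| ≤ |(1+s)^a| + |s^a| := abs_sub _ _
    _ = (1+s)^a + s^a := by
        rw [abs_of_nonneg (Real.rpow_nonneg (by linarith) a),
          abs_of_nonneg (Real.rpow_nonneg hs0.le a)]
    _ ≤ 2 + s^a := by linarith

lemma f_bound {a : ℝ} (ha1 : a ≤ 1) {s : ℝ} (hs : 0 < s) :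
    |(1+s)^a - s^a| ≤ |a| * s^(a-1) := by
  rcases eq_or_ne a 0 with rfl|ha0
  · simp [Real.rpow_zero]
  have hkey : (1+s)^a - s^a = ∫ t in s..(s+1), a * t^(a-1) := by
    have hder : ∀ t ∈ Set.uIcc s (s+1), HasDerivAt (fun y : ℝ => y^a) (a * t^(a-1)) t := by
      intro t ht
      rw [Set.uIcc_of_le (by linarith)] at ht
      exact Real.hasDerivAt_rpow_const (Or.inl (lt_of_lt_of_le hs ht.1).ne')
    have hint : IntervalIntegrable (fun t : ℝ => a * t^(a-1)) volume s (s+1) := by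
      apply ContinuousOn.intervalIntegrable
      refine continuousOn_const.mul (ContinuousOn.rpow_const continuousOn_id fun t ht => ?_)
      rw [Set.uIcc_of_le (by linarith)] at ht
      exact Or.inl (lt_of_lt_of_le hs ht.1).ne'
    have h := intervalIntegral.integral_eq_sub_of_hasDerivAt hder hint
    rw [h, add_comm 1 s]
  rw [hkey]
  have hb : ‖∫ t in s..(s+1), a * t^(a-1)‖ ≤ (|a| * s^(a-1)) * |s+1-s| := by
    refine intervalIntegral.norm_integral_le_of_norm_le_const fun t ht => ?_
    rw [Set.uIoc_of_le (by linarith)] at ht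
    have ht0 : 0 < t := lt_trans hs ht.1
    rw [Real.norm_eq_abs, abs_mul, abs_of_nonneg (Real.rpow_nonneg ht0.le _)]
    have hle : t^(a-1) ≤ s^(a-1) :=
      Real.rpow_le_rpow_of_nonpos hs ht.1.le (by linarith)
    exact mul_le_mul_of_nonneg_left hle (abs_nonneg a)
  calc |∫ t in s..(s+1), a * t^(a-1)| = ‖∫ t in s..(s+1), a * t^(a-1)‖ :=
        (Real.norm_eq_abs _).symm
    _ ≤ (|a| * s^(a-1)) * |s+1-s| := hb
    _ = |a| * s^(a-1) := by norm_num

/-! ### Integrability of the main integrands -/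

lemma intOn_sq {a : ℝ} (hb : -(1/2:ℝ) < a) (ha : a < 1/2) :
    IntegrableOn (fun s : ℝ => ((1+s)^a - s^a)^2) (Ioi (0:ℝ)) := by
  refine intOn_bound ((contOn_f a).pow 2)
    (b1 := fun s => 4 + 4*s^a + s^a*s^a)
    (b2 := fun s => (|a| * |a|) * (s^(a-1)*s^(a-1))) ?_ ?_ ?_ ?_
  · refine (((MeasureTheory.integrableOn_const measure_Ioc_lt_top.ne).add
      ((intOn_rpow_Ioc (by linarith)).const_mul 4)).add ?_)
    refine MeasureTheory.IntegrableOn.congr_fun (intOn_rpow_Ioc (r := a + a) (by linarith))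
      (fun s hs => Real.rpow_add hs.1 a a) measurableSet_Ioc
  · exact (intOn_rpow_mul_Ioi (by linarith)).const_mul _
  · intro s hs
    have h := f_le_Ioc (show a ≤ 1 by linarith) s hs
    calc |((1+s)^a - s^a)^2| = |(1+s)^a - s^a|^2 := by rw [← pow_abs]
      _ ≤ (2 + s^a)^2 := pow_le_pow_left₀ (abs_nonneg _) h 2
      _ = 4 + 4*s^a + s^a*s^a := by ring
  · intro s hs
    have hs0 : (0:ℝ) < s := lt_trans zero_lt_one hs
    have h := f_bound (show a ≤ 1 by linarith) hs0
    calc |((1+s)^a - s^a)^2| = |(1+s)^a - s^a|^2 := by rw [← pow_abs]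
      _ ≤ (|a| * s^(a-1))^2 := pow_le_pow_left₀ (abs_nonneg _) h 2
      _ = (|a| * |a|) * (s^(a-1)*s^(a-1)) := by ring

lemma intOn_K {a : ℝ} (hb : -(1/2:ℝ) < a) (ha : a < 1/2) :
    IntegrableOn (fun s : ℝ => (1+s)^(a-1) * ((1+s)^a - s^a)) (Ioi (0:ℝ)) := by
  refine intOn_bound ((contOn_rpow1p (a-1)).mul (contOn_f a))
    (b1 := fun s => 2 + s^a)
    (b2 := fun s => |a| * (s^(a-1)*s^(a-1))) ?_ ?_ ?_ ?_
  · exact (MeasureTheory.integrableOn_const measure_Ioc_lt_top.ne).add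
      (intOn_rpow_Ioc (by linarith))
  · exact (intOn_rpow_mul_Ioi (by linarith)).const_mul _
  · intro s hs
    have hs0 := hs.1
    have hle1 : (1+s)^(a-1) ≤ 1 :=
      Real.rpow_le_one_of_one_le_of_nonpos (by linarith) (by linarith)
    have hnn : (0:ℝ) ≤ (1+s)^(a-1) := Real.rpow_nonneg (by linarith) _
    calc |(1+s)^(a-1) * ((1+s)^a - s^a)| = (1+s)^(a-1) * |(1+s)^a - s^a| := by
          rw [abs_mul, abs_of_nonneg hnn]
      _ ≤ 1 * (2 + s^a) := by
          refine mul_le_mul hle1 (f_le_Ioc (by linarith) s hs) (abs_nonneg _) zero_le_one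
      _ = 2 + s^a := one_mul _
  · intro s hs
    have hs0 : (0:ℝ) < s := lt_trans zero_lt_one hs
    have hle1 : (1+s)^(a-1) ≤ s^(a-1) :=
      Real.rpow_le_rpow_of_nonpos hs0 (by linarith) (by linarith)
    have hnn : (0:ℝ) ≤ (1+s)^(a-1) := Real.rpow_nonneg (by linarith) _
    calc |(1+s)^(a-1) * ((1+s)^a - s^a)| = (1+s)^(a-1) * |(1+s)^a - s^a| := by
          rw [abs_mul, abs_of_nonneg hnn]
      _ ≤ s^(a-1) * (|a| * s^(a-1)) := by
          refine mul_le_mul hle1 (f_bound (by linarith) hs0) (abs_nonneg _)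
            (Real.rpow_nonneg hs0.le _)
      _ = |a| * (s^(a-1)*s^(a-1)) := by ring

lemma intOn_Ba {a : ℝ} (ha0 : 0 < a) (ha : a < 1/2) :
    IntegrableOn (fun s : ℝ => s^(a-1) * (1+s)^(a-1)) (Ioi (0:ℝ)) := by
  refine intOn_bound ((contOn_rpow (a-1)).mul (contOn_rpow1p (a-1)))
    (b1 := fun s => s^(a-1)) (b2 := fun s => s^(a-1)*s^(a-1)) ?_ ?_ ?_ ?_
  · exact intOn_rpow_Ioc (by linarith)
  · exact intOn_rpow_mul_Ioi (by linarith)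
  · intro s hs
    have hs0 := hs.1
    have hle1 : (1+s)^(a-1) ≤ 1 :=
      Real.rpow_le_one_of_one_le_of_nonpos (by linarith) (by linarith)
    rw [abs_of_nonneg (by positivity)]
    exact mul_le_of_le_one_right (Real.rpow_nonneg hs0.le _) hle1
  · intro s hs
    have hs0 : (0:ℝ) < s := lt_trans zero_lt_one hs
    have hle1 : (1+s)^(a-1) ≤ s^(a-1) :=
      Real.rpow_le_rpow_of_nonpos hs0 (by linarith) (by linarith)
    rw [abs_of_nonneg (by positivity)]
    exact mul_le_mul_of_nonneg_left hle1 (Real.rpow_nonneg hs0.le _)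

lemma intOn_2am1 {a : ℝ} (ha0 : a < 0) :
    IntegrableOn (fun s : ℝ => (1+s)^(2*a-1)) (Ioi (0:ℝ)) := by
  refine intOn_bound (contOn_rpow1p (2*a-1))
    (b1 := fun _ => (1:ℝ)) (b2 := fun s => s^(2*a-1)) ?_ ?_ ?_ ?_
  · exact MeasureTheory.integrableOn_const measure_Ioc_lt_top.ne
  · exact integrableOn_Ioi_rpow_of_lt (by linarith) zero_lt_one
  · intro s hs
    have hs0 := hs.1
    rw [abs_of_nonneg (Real.rpow_nonneg (by linarith) _)]
    exact Real.rpow_le_one_of_one_le_of_nonpos (by linarith) (by linarith)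
  · intro s hs
    have hs0 : (0:ℝ) < s := lt_trans zero_lt_one hs
    rw [abs_of_nonneg (Real.rpow_nonneg (by linarith) _)]
    exact Real.rpow_le_rpow_of_nonpos hs0 (by linarith) (by linarith)

lemma intOn_neg2 {a : ℝ} (hb : -(1/2:ℝ) < a) (ha0 : a < 0) :
    IntegrableOn (fun s : ℝ => s^a * (1+s)^(a-1)) (Ioi (0:ℝ)) := by
  refine intOn_bound ((contOn_rpow a).mul (contOn_rpow1p (a-1)))
    (b1 := fun s => s^a) (b2 := fun s => s^a*s^(a-1)) ?_ ?_ ?_ ?_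
  · exact intOn_rpow_Ioc (by linarith)
  · exact intOn_rpow_mul_Ioi (by linarith)
  · intro s hs
    have hs0 := hs.1
    have hle1 : (1+s)^(a-1) ≤ 1 :=
      Real.rpow_le_one_of_one_le_of_nonpos (by linarith) (by linarith)
    rw [abs_of_nonneg (by positivity)]
    exact mul_le_of_le_one_right (Real.rpow_nonneg hs0.le _) hle1
  · intro s hs
    have hs0 : (0:ℝ) < s := lt_trans zero_lt_one hs
    have hle1 : (1+s)^(a-1) ≤ s^(a-1) :=
      Real.rpow_le_rpow_of_nonpos hs0 (by linarith) (by linarith)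
    rw [abs_of_nonneg (by positivity)]
    exact mul_le_mul_of_nonneg_left hle1 (Real.rpow_nonneg hs0.le _)

/-! ### Derivative helpers -/

lemma hasDerivAt_one_add_rpow {b s : ℝ} (hs : -1 < s) :
    HasDerivAt (fun s : ℝ => (1+s)^b) (b*(1+s)^(b-1)) s := by
  have hne : (1:ℝ) + s ≠ 0 := by
    have : (0:ℝ) < 1 + s := by linarith
    exact this.ne'
  have h := Real.hasDerivAt_rpow_const (x := 1+s) (p := b) (Or.inl hne)
  have h2 : HasDerivAt (fun y : ℝ => 1+y) 1 s := (hasDerivAt_id s).const_add 1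
  have h3 := h.comp s h2
  simpa [Function.comp_def] using h3

lemma rpow_mul_self {s : ℝ} (hs : 0 < s) (y : ℝ) : s * s^y = s^(y+1) := by
  rw [Real.rpow_add_one hs.ne' y, mul_comm]

/-! ### The key integration-by-parts identity on (0,∞) -/

lemma key_int {a : ℝ} (hb : -(1/2:ℝ) < a) (ha : a < 1/2) :
    ∫ s in Ioi (0:ℝ),
      ((2*a+1) * ((1+s)^a - s^a)^2 - 2*a*((1+s)^(a-1) * ((1+s)^a - s^a))) = 0 := by
  rcases eq_or_ne a 0 with rfl|ha0
  · simp [Real.rpow_zero]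
  set F : ℝ → ℝ := fun s => s * ((1+s)^a - s^a)^2 with hF
  have hderiv : ∀ s ∈ Ioi (0:ℝ), HasDerivAt F
      ((2*a+1) * ((1+s)^a - s^a)^2 - 2*a*((1+s)^(a-1) * ((1+s)^a - s^a))) s := by
    intro s hs
    have hs0 : (0:ℝ) < s := hs
    have hf : HasDerivAt (fun s : ℝ => (1+s)^a - s^a) (a*(1+s)^(a-1) - a*s^(a-1)) s :=
      (hasDerivAt_one_add_rpow (by linarith)).sub
        (Real.hasDerivAt_rpow_const (Or.inl hs0.ne'))
    have hFd := (hasDerivAt_id s).mul (hf.pow 2)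
    have hA : (1+s) * (1+s)^(a-1) = (1+s)^a := by
      rw [rpow_mul_self (show (0:ℝ) < 1+s by linarith) (a-1)]
      congr 1
      ring
    have hS : s * s^(a-1) = s^a := by
      rw [rpow_mul_self hs0 (a-1)]
      congr 1
      ring
    refine hFd.congr_deriv ?_
    simp only [id_eq, Pi.pow_apply]
    rw [← hA, ← hS]
    push_cast
    ring
  have hcont : ContinuousWithinAt F (Ici (0:ℝ)) 0 := by
    have hF0 : F 0 = 0 := by simp [hF]
    show Tendsto F (nhdsWithin 0 (Ici (0:ℝ))) (nhds (F 0))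
    rw [hF0]
    have t1 : Tendsto (fun s : ℝ => 4*s + (4*s^(1+a) + s^(1+2*a)))
        (nhdsWithin 0 (Ici (0:ℝ))) (nhds 0) := by
      have c1 : ContinuousAt (fun s : ℝ => 4*s + (4*s^(1+a) + s^(1+2*a))) 0 := by
        refine (continuousAt_const.mul continuousAt_id).add (ContinuousAt.add ?_ ?_)
        · exact continuousAt_const.mul
            (Real.continuousAt_rpow_const 0 (1+a) (Or.inr (by linarith)))
        · exact Real.continuousAt_rpow_const 0 (1+2*a) (Or.inr (by linarith))
      have hval : 4*(0:ℝ) + (4*(0:ℝ)^(1+a) + (0:ℝ)^(1+2*a)) = 0 := by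
        rw [Real.zero_rpow (by linarith : (1:ℝ)+a ≠ 0),
          Real.zero_rpow (by linarith : (1:ℝ)+2*a ≠ 0)]
        ring
      have := c1.tendsto
      rw [hval] at this
      exact this.mono_left nhdsWithin_le_nhds
    refine squeeze_zero' ?_ ?_ t1
    · filter_upwards [self_mem_nhdsWithin] with s hs
      exact mul_nonneg hs (sq_nonneg _)
    · filter_upwards [Ico_mem_nhdsGE (zero_lt_one : (0:ℝ) < 1)]
        with s hs
      rcases eq_or_lt_of_le hs.1 with h0|h0
      · rw [hF, ← h0]
        simp [Real.zero_rpow (by linarith : (1:ℝ)+a ≠ 0),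
          Real.zero_rpow (by linarith : (1:ℝ)+2*a ≠ 0)]
      · have hb1 := f_le_Ioc (show a ≤ 1 by linarith) s ⟨h0, hs.2.le⟩
        have hsq : ((1+s)^a - s^a)^2 ≤ (2 + s^a)^2 := by
          rw [← sq_abs]
          exact pow_le_pow_left₀ (abs_nonneg _) hb1 2
        have e1 : s * s^a = s^(a+1) := rpow_mul_self h0 a
        have e2 : s * (s^a * s^a) = s^(a+a+1) := by
          rw [← Real.rpow_add h0 a a, rpow_mul_self h0 (a+a)]
        calc F s ≤ s * (2 + s^a)^2 := mul_le_mul_of_nonneg_left hsq h0.le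
          _ = 4*s + (4*(s*s^a) + s*(s^a*s^a)) := by ring
          _ = 4*s + (4*s^(1+a) + s^(1+2*a)) := by
              rw [e1, e2, show a+1 = 1+a by ring, show a+a+1 = 1+2*a by ring]
  have htend : Tendsto F atTop (nhds 0) := by
    have T1 : Tendsto (fun s : ℝ => s^(2*a-1)) atTop (nhds 0) := by
      have h := tendsto_rpow_neg_atTop (y := 1-2*a) (by linarith)
      have he : (fun s : ℝ => s^(-(1-2*a))) = fun s : ℝ => s^(2*a-1) := by
        funext s; congr 1; ring
      rwa [he] at h
    have T2 : Tendsto (fun s : ℝ => s * ((1+s⁻¹)^a - 1)) atTop (nhds a) := by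
      have hd : HasDerivAt (fun y : ℝ => (1+y)^a) a 0 := by
        have := hasDerivAt_one_add_rpow (b := a) (s := 0) (by norm_num)
        simpa using this
      have hslope := hasDerivAt_iff_tendsto_slope.mp hd
      have hinv : Tendsto (fun s : ℝ => s⁻¹) atTop (nhdsWithin 0 {(0:ℝ)}ᶜ) :=
        tendsto_inv_atTop_nhdsGT_zero.mono_right
          (nhdsWithin_mono 0 fun x hx => Set.mem_compl_singleton_iff.mpr (ne_of_gt hx))
      have hcomp := hslope.comp hinv
      refine hcomp.congr' ?_
      filter_upwards [eventually_gt_atTop 0] with s hs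
      have hs0 : s ≠ 0 := hs.ne'
      show slope (fun y : ℝ => (1+y)^a) 0 s⁻¹ = s * ((1+s⁻¹)^a - 1)
      rw [slope_def_field]
      rw [show (1:ℝ)+(0:ℝ) = 1 by norm_num, Real.one_rpow, sub_zero, div_eq_mul_inv, inv_inv]
      ring
    have Tprod := T1.mul (T2.mul T2)
    rw [zero_mul] at Tprod
    refine Tprod.congr' ?_
    filter_upwards [eventually_gt_atTop 0] with s hs
    have h1 : (1:ℝ)+s = s*(1+s⁻¹) := by
      field_simp
      ring
    have e : s^(2*a-1)*(s*s) = s*(s^a*s^a) := by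
      rw [← Real.rpow_add hs a a]
      rw [rpow_mul_self hs (a+a)]
      rw [show s*s = s*s^(1:ℝ) by rw [Real.rpow_one], rpow_mul_self hs 1,
        ← Real.rpow_add hs]
      congr 1
      ring
    show s^(2*a-1) * (s * ((1+s⁻¹)^a - 1) * (s * ((1+s⁻¹)^a - 1))) = F s
    rw [hF]
    show s^(2*a-1) * (s * ((1+s⁻¹)^a - 1) * (s * ((1+s⁻¹)^a - 1)))
      = s * ((1+s)^a - s^a)^2
    rw [h1, Real.mul_rpow hs.le (by positivity)]
    linear_combination ((1+s⁻¹)^a - 1)^2 * e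
  have hint : IntegrableOn (fun s : ℝ =>
      (2*a+1) * ((1+s)^a - s^a)^2 - 2*a*((1+s)^(a-1) * ((1+s)^a - s^a))) (Ioi 0) :=
    ((intOn_sq hb ha).const_mul _).sub ((intOn_K hb ha).const_mul _)
  have hFTC := MeasureTheory.integral_Ioi_of_hasDerivAt_of_tendsto hcont hderiv hint htend
  have hF0 : F 0 = 0 := by simp [hF]
  rw [hF0, sub_zero] at hFTC
  exact hFTC

/-! ### Evaluation of K for a > 0 -/

lemma K_pos {a : ℝ} (ha0 : 0 < a) (ha : a < 1/2) :
    2*a*(∫ s in Ioi (0:ℝ), (1+s)^(a-1) * ((1+s)^a - s^a)) + 1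
      = Gamma (a+1) * Gamma (1-2*a) / Gamma (1-a) := by
  have hb : -(1/2:ℝ) < a := by linarith
  set G : ℝ → ℝ := fun s => a⁻¹*((1+s)^a*((1+s)^a - s^a)) with hG
  have hderiv : ∀ s ∈ Ioi (0:ℝ), HasDerivAt G
      (2*((1+s)^(a-1) * ((1+s)^a - s^a)) - s^(a-1)*(1+s)^(a-1)) s := by
    intro s hs
    have hs0 : (0:ℝ) < s := hs
    have h1 : HasDerivAt (fun s : ℝ => (1+s)^a) (a*(1+s)^(a-1)) s :=
      hasDerivAt_one_add_rpow (by linarith)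
    have h2 : HasDerivAt (fun s : ℝ => s^a) (a*s^(a-1)) s :=
      Real.hasDerivAt_rpow_const (Or.inl hs0.ne')
    have hd := ((h1.mul (h1.sub h2)).const_mul a⁻¹)
    have hA : (1+s) * (1+s)^(a-1) = (1+s)^a := by
      rw [rpow_mul_self (show (0:ℝ) < 1+s by linarith) (a-1)]
      congr 1
      ring
    have hS : s * s^(a-1) = s^a := by
      rw [rpow_mul_self hs0 (a-1)]
      congr 1
      ring
    refine hd.congr_deriv ?_
    simp only [Pi.sub_apply]
    rw [← hA, ← hS]
    field_simp
    ring
  have hcont : ContinuousWithinAt G (Ici (0:ℝ)) 0 := by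
    have c1 : ContinuousAt (fun s : ℝ => (1+s)^a) 0 := by
      have hcomp : ContinuousAt (fun y : ℝ => y^a) ((1:ℝ)+0) :=
        Real.continuousAt_rpow_const (1+0) a (Or.inl (by norm_num))
      exact hcomp.comp ((continuous_const.add continuous_id).continuousAt)
    have c2 : ContinuousAt (fun s : ℝ => s^a) 0 :=
      Real.continuousAt_rpow_const 0 a (Or.inr ha0.le)
    exact (continuousAt_const.mul (c1.mul (c1.sub c2))).continuousWithinAt
  have htend : Tendsto G atTop (nhds 0) := by
    have T1 : Tendsto (fun s : ℝ => s^(2*a-1)) atTop (nhds 0) := by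
      have h := tendsto_rpow_neg_atTop (y := 1-2*a) (by linarith)
      have he : (fun s : ℝ => s^(-(1-2*a))) = fun s : ℝ => s^(2*a-1) := by
        funext s; congr 1; ring
      rwa [he] at h
    have T2 : Tendsto (fun s : ℝ => s * ((1+s⁻¹)^a - 1)) atTop (nhds a) := by
      have hd : HasDerivAt (fun y : ℝ => (1+y)^a) a 0 := by
        have := hasDerivAt_one_add_rpow (b := a) (s := 0) (by norm_num)
        simpa using this
      have hslope := hasDerivAt_iff_tendsto_slope.mp hd
      have hinv : Tendsto (fun s : ℝ => s⁻¹) atTop (nhdsWithin 0 {(0:ℝ)}ᶜ) :=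
        tendsto_inv_atTop_nhdsGT_zero.mono_right
          (nhdsWithin_mono 0 fun x hx => Set.mem_compl_singleton_iff.mpr (ne_of_gt hx))
      have hcomp := hslope.comp hinv
      refine hcomp.congr' ?_
      filter_upwards [eventually_gt_atTop 0] with s hs
      have hs0 : s ≠ 0 := hs.ne'
      show slope (fun y : ℝ => (1+y)^a) 0 s⁻¹ = s * ((1+s⁻¹)^a - 1)
      rw [slope_def_field]
      rw [show (1:ℝ)+(0:ℝ) = 1 by norm_num, Real.one_rpow, sub_zero, div_eq_mul_inv, inv_inv]
      ring
    have T3 : Tendsto (fun s : ℝ => (1+s⁻¹)^a) atTop (nhds 1) := by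
      have hc : ContinuousAt (fun y : ℝ => y^a) 1 :=
        Real.continuousAt_rpow_const 1 a (Or.inl one_ne_zero)
      have hl : Tendsto (fun s : ℝ => 1+s⁻¹) atTop (nhds 1) := by
        have := tendsto_const_nhds (α := ℝ) (f := atTop (α := ℝ)) (x := (1:ℝ))
        have h2 := this.add tendsto_inv_atTop_zero
        simpa using h2
      have := hc.tendsto.comp hl
      simpa [Real.one_rpow, Function.comp_def] using this
    have Tprod := (tendsto_const_nhds (x := a⁻¹)).mul (T1.mul (T3.mul T2))
    have hlim : a⁻¹ * (0 * (1 * a)) = 0 := by ring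
    rw [hlim] at Tprod
    refine Tprod.congr' ?_
    filter_upwards [eventually_gt_atTop 0] with s hs
    have h1 : (1:ℝ)+s = s*(1+s⁻¹) := by
      field_simp
      ring
    have e2 : s^(2*a-1)*s = s^a*s^a := by
      rw [mul_comm (s^(2*a-1)) s, rpow_mul_self hs (2*a-1), ← Real.rpow_add hs]
      congr 1
      ring
    show a⁻¹ * (s^(2*a-1) * ((1+s⁻¹)^a * (s * ((1+s⁻¹)^a - 1)))) = G s
    rw [hG]
    show a⁻¹ * (s^(2*a-1) * ((1+s⁻¹)^a * (s * ((1+s⁻¹)^a - 1))))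
      = a⁻¹*((1+s)^a*((1+s)^a - s^a))
    rw [h1, Real.mul_rpow hs.le (by positivity)]
    linear_combination (a⁻¹ * ((1+s⁻¹)^a) * ((1+s⁻¹)^a - 1)) * e2
  have hint : IntegrableOn (fun s : ℝ =>
      2*((1+s)^(a-1) * ((1+s)^a - s^a)) - s^(a-1)*(1+s)^(a-1)) (Ioi 0) :=
    ((intOn_K hb ha).const_mul _).sub (intOn_Ba ha0 ha)
  have hFTC := MeasureTheory.integral_Ioi_of_hasDerivAt_of_tendsto hcont hderiv hint htend
  have hG0 : G 0 = a⁻¹ := by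
    rw [hG]
    show a⁻¹*((1+0)^a*((1+0)^a - (0:ℝ)^a)) = a⁻¹
    rw [show (1:ℝ)+0 = 1 by norm_num, Real.one_rpow, Real.zero_rpow ha0.ne']
    ring
  rw [hG0, zero_sub] at hFTC
  rw [MeasureTheory.integral_sub ((intOn_K hb ha).const_mul _) (intOn_Ba ha0 ha),
    MeasureTheory.integral_const_mul,
    beta_Ioi a (1-2*a) (a-1) (a-1) ha0 (by linarith) (by ring) (by ring)] at hFTC
  rw [show a + (1-2*a) = 1-a by ring] at hFTC
  have hQ : Gamma (1-a) ≠ 0 := (Real.Gamma_pos_of_pos (by linarith)).ne'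
  have hK : (∫ s in Ioi (0:ℝ), (1+s)^(a-1) * ((1+s)^a - s^a))
      = (Gamma a * Gamma (1-2*a) / Gamma (1-a) - a⁻¹)/2 := by linarith
  rw [hK, Real.Gamma_add_one ha0.ne']
  field_simp
  ring

/-! ### Evaluation of K for a < 0 -/

lemma K_neg {a : ℝ} (hb : -(1/2:ℝ) < a) (ha0 : a < 0) :
    2*a*(∫ s in Ioi (0:ℝ), (1+s)^(a-1) * ((1+s)^a - s^a)) + 1
      = Gamma (a+1) * Gamma (1-2*a) / Gamma (1-a) := by
  have hsplit : ∀ s ∈ Ioi (0:ℝ),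
      (1+s)^(a-1) * ((1+s)^a - s^a) = (1+s)^(2*a-1) - s^a*(1+s)^(a-1) := by
    intro s hs
    have hs0 : (0:ℝ) < s := hs
    have h : (1+s)^(a-1)*(1+s)^a = (1+s)^(2*a-1) := by
      rw [← Real.rpow_add (by linarith)]
      congr 1
      ring
    rw [mul_sub, h]
    ring
  have hKrw : (∫ s in Ioi (0:ℝ), (1+s)^(a-1) * ((1+s)^a - s^a))
      = ∫ s in Ioi (0:ℝ), ((1+s)^(2*a-1) - s^a*(1+s)^(a-1)) :=
    setIntegral_congr_fun measurableSet_Ioi hsplit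
  -- FTC for the first piece
  set G : ℝ → ℝ := fun s => (2*a)⁻¹*(1+s)^(2*a) with hG
  have h2a : (2*a) ≠ 0 := by linarith
  have hderiv : ∀ s ∈ Ioi (0:ℝ), HasDerivAt G ((1+s)^(2*a-1)) s := by
    intro s hs
    have hs0 : (0:ℝ) < s := hs
    have h := (hasDerivAt_one_add_rpow (b := 2*a) (s := s) (by linarith)).const_mul (2*a)⁻¹
    have he : (2*a)⁻¹ * (2*a*(1+s)^(2*a-1)) = (1+s)^(2*a-1) := by
      exact inv_mul_cancel_left₀ h2a _
    rwa [he] at h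
  have hcont : ContinuousWithinAt G (Ici (0:ℝ)) 0 := by
    have c1 : ContinuousAt (fun s : ℝ => (1+s)^(2*a)) 0 := by
      have hcomp : ContinuousAt (fun y : ℝ => y^(2*a)) ((1:ℝ)+0) :=
        Real.continuousAt_rpow_const (1+0) (2*a) (Or.inl (by norm_num))
      exact hcomp.comp ((continuous_const.add continuous_id).continuousAt)
    exact (continuousAt_const.mul c1).continuousWithinAt
  have htend : Tendsto G atTop (nhds 0) := by
    have h0 : Tendsto (fun x : ℝ => x^(2*a)) atTop (nhds 0) := by
      have h := tendsto_rpow_neg_atTop (y := -(2*a)) (by linarith)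
      simpa [neg_neg] using h
    have h1 : Tendsto (fun s : ℝ => (1:ℝ)+s) atTop atTop :=
      tendsto_atTop_add_const_left atTop 1 tendsto_id
    have h2 := h0.comp h1
    have h3 := h2.const_mul (2*a)⁻¹
    rw [mul_zero] at h3
    exact h3
  have hint1 : IntegrableOn (fun s : ℝ => (1+s)^(2*a-1)) (Ioi (0:ℝ)) := intOn_2am1 ha0
  have hFTC := MeasureTheory.integral_Ioi_of_hasDerivAt_of_tendsto hcont hderiv hint1 htend
  have hG0 : G 0 = (2*a)⁻¹ := by
    rw [hG]
    show (2*a)⁻¹*((1:ℝ)+0)^(2*a) = (2*a)⁻¹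
    rw [show (1:ℝ)+0 = 1 by norm_num, Real.one_rpow, mul_one]
  rw [hG0, zero_sub] at hFTC
  -- Beta for the second piece
  have hbeta : (∫ s in Ioi (0:ℝ), s^a * (1+s)^(a-1))
      = Gamma (a+1) * Gamma (-(2*a)) / Gamma (1-a) := by
    have := beta_Ioi (a+1) (-(2*a)) a (a-1) (by linarith) (by linarith) (by ring) (by ring)
    rw [show (a+1) + -(2*a) = 1-a by ring] at this
    exact this
  have hint2 : IntegrableOn (fun s : ℝ => s^a * (1+s)^(a-1)) (Ioi (0:ℝ)) :=
    intOn_neg2 hb ha0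
  rw [hKrw, MeasureTheory.integral_sub hint1 hint2, hFTC, hbeta]
  have hg2 : Gamma (1-2*a) = (-(2*a)) * Gamma (-(2*a)) := by
    rw [show (1:ℝ)-2*a = -(2*a)+1 by ring,
      Real.Gamma_add_one (by linarith : -(2*a) ≠ 0)]
  have hQ : Gamma (1-a) ≠ 0 := (Real.Gamma_pos_of_pos (by linarith)).ne'
  rw [hg2]
  have ha0' : a ≠ 0 := ha0.ne
  field_simp
  ring

end FBMaux

open FBMaux Set Filter in
/-- The normalization constant of fractional Brownian motion:
for `H ∈ (0,1)`,
`(1/Γ(H+1/2)²)·[∫₀^∞ ((1+s)^{H-1/2} − s^{H-1/2})² ds + 1/(2H)] = 1/(Γ(2H+1)·sin(πH))`. -/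
theorem fbm_normalization_constant (H : ℝ) (hH : H ∈ Set.Ioo (0:ℝ) 1) :
    (1 / (Real.Gamma (H + 1/2))^2) *
      ((∫ s in Set.Ioi (0:ℝ), ((1+s) ^ (H - 1/2) - s ^ (H - 1/2))^2) + 1/(2*H))
      = 1 / (Real.Gamma (2*H + 1) * Real.sin (Real.pi * H)) := by
  obtain ⟨hH0, hH1⟩ := hH
  rcases eq_or_ne H (1/2 : ℝ) with rfl|hHne
  · rw [show (1:ℝ)/2 - 1/2 = 0 by norm_num]
    simp only [Real.rpow_zero, sub_self]
    rw [show ((0:ℝ)^2 : ℝ) = 0 by norm_num]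
    rw [MeasureTheory.integral_zero]
    rw [show (1:ℝ)/2 + 1/2 = 1 by norm_num, Real.Gamma_one,
      show (2:ℝ)*(1/2) + 1 = 2 by norm_num, Real.Gamma_two,
      show Real.pi * (1/2) = Real.pi/2 by ring, Real.sin_pi_div_two]
    norm_num
  · set a := H - 1/2 with ha
    have hb : -(1/2:ℝ) < a := by rw [ha]; linarith
    have ha2 : a < 1/2 := by rw [ha]; linarith
    have ha0 : a ≠ 0 := by
      rw [ha]
      intro h
      exact hHne (by linarith)
    clear_value a
    have hkey := key_int hb ha2
    have hI : IntegrableOn (fun s : ℝ => ((1+s)^a - s^a)^2) (Ioi (0:ℝ)) := intOn_sq hb ha2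
    have hKint : IntegrableOn (fun s : ℝ => (1+s)^(a-1) * ((1+s)^a - s^a)) (Ioi (0:ℝ)) :=
      intOn_K hb ha2
    rw [MeasureTheory.integral_sub (hI.const_mul _) (hKint.const_mul _),
      MeasureTheory.integral_const_mul, MeasureTheory.integral_const_mul] at hkey
    set I := ∫ s in Set.Ioi (0:ℝ), ((1+s)^a - s^a)^2 with hIdef
    set K := ∫ s in Set.Ioi (0:ℝ), (1+s)^(a-1) * ((1+s)^a - s^a) with hKdef
    clear_value I K
    have h2aK : 2*a*K + 1 = Gamma (a+1)*Gamma (1-2*a)/Gamma (1-a) := by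
      rw [hKdef]
      rcases lt_or_gt_of_ne ha0 with hneg|hpos
      · exact K_neg hb hneg
      · exact K_pos hpos ha2
    have hP : 0 < Gamma (a+1) := Real.Gamma_pos_of_pos (by linarith)
    have hQ : 0 < Gamma (1-a) := Real.Gamma_pos_of_pos (by linarith)
    have hR : 0 < Gamma (1-2*a) := Real.Gamma_pos_of_pos (by linarith)
    have hT : 0 < Gamma (2*a+2) := Real.Gamma_pos_of_pos (by linarith)
    have hπ := Real.pi_pos
    have hsin : Real.sin (Real.pi*a) ≠ 0 := by
      rw [Real.sin_ne_zero_iff]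
      intro n h
      have hna : (n:ℝ) = a := by
        have h' : ((n:ℝ) - a) * Real.pi = 0 := by linarith [h]
        rcases mul_eq_zero.1 h' with h''|h''
        · linarith
        · exact absurd h'' hπ.ne'
      have hn1 : -1 < (n:ℝ) := by rw [hna]; linarith
      have hn2 : (n:ℝ) < 1 := by rw [hna]; linarith
      have hn0 : n = 0 := by
        have l1 : (-1:ℤ) < n := by exact_mod_cast hn1
        have l2 : n < (1:ℤ) := by exact_mod_cast hn2
        omega
      rw [hn0] at hna
      exact ha0 (by exact_mod_cast hna.symm)
    have hcos : 0 < Real.cos (Real.pi*a) :=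
      Real.cos_pos_of_mem_Ioo ⟨by nlinarith, by nlinarith⟩
    have hrefl : Gamma a * Gamma (1-a) = Real.pi / Real.sin (Real.pi*a) :=
      Real.Gamma_mul_Gamma_one_sub a
    have hrefl2 : Gamma (2*a) * Gamma (1-2*a) = Real.pi / Real.sin (Real.pi*(2*a)) := by
      have := Real.Gamma_mul_Gamma_one_sub (2*a)
      rwa [show (1:ℝ) - 2*a = 1-2*a by ring] at this
    have hsin2 : Real.sin (Real.pi*(2*a)) = 2*Real.sin (Real.pi*a)*Real.cos (Real.pi*a) := by
      rw [show Real.pi*(2*a) = 2*(Real.pi*a) by ring, Real.sin_two_mul]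
    have hGa : Gamma (a+1) = a * Gamma a := Real.Gamma_add_one ha0
    have hT2 : Gamma (2*a+2) = (2*a+1)*((2*a)*Gamma (2*a)) := by
      rw [show 2*a+2 = (2*a+1)+1 by ring,
        Real.Gamma_add_one (by linarith : (2*a+1:ℝ) ≠ 0),
        Real.Gamma_add_one (by simpa using ha0 : (2*a:ℝ) ≠ 0)]
    have key2 : Gamma (2*a+2) * Real.cos (Real.pi*a) * Gamma (1-2*a)
        = (2*a+1)*(Gamma (a+1)*Gamma (1-a)) := by
      rw [hT2, hGa]
      have e : (2*a)*(Gamma (2*a)*Gamma (1-2*a))*Real.cos (Real.pi*a)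
          = a*(Gamma a*Gamma (1-a)) := by
        rw [hrefl, hrefl2, hsin2]
        have hcos' : Real.cos (Real.pi*a) ≠ 0 := hcos.ne'
        have hcos3 : Real.cos (a*Real.pi) ≠ 0 := by rw [mul_comm]; exact hcos.ne'
        field_simp
      linear_combination (2*a+1) * e
    have h2H : (2:ℝ)*H = 2*a+1 := by rw [ha]; ring
    have hH12 : H + 1/2 = a+1 := by rw [ha]; ring
    have h2H1 : 2*H+1 = 2*a+2 := by rw [ha]; ring
    have hsinH : Real.sin (Real.pi*H) = Real.cos (Real.pi*a) := by
      rw [show Real.pi*H = Real.pi*a + Real.pi/2 by rw [ha]; ring,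
        Real.sin_add_pi_div_two]
    rw [hH12, h2H1, hsinH, h2H]
    have h2a1 : (2*a+1:ℝ) ≠ 0 := by linarith
    have hIval : I + 1/(2*a+1) = (2*a*K+1)/(2*a+1) := by
      field_simp
      linarith [hkey]
    rw [hIval, h2aK]
    have hT' := hT.ne'
    have hcos'' := hcos.ne'
    have hP' := hP.ne'
    have hQ' := hQ.ne'
    generalize Gamma (2*a+2) = T at hT' key2 ⊢
    generalize Real.cos (Real.pi*a) = c at hcos'' key2 ⊢
    generalize Gamma (1-2*a) = R at key2 ⊢
    generalize Gamma (a+1) = P at hP' key2 ⊢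
    generalize Gamma (1-a) = Q at hQ' key2 ⊢
    field_simp
    linear_combination key2
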